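/- Let (v_t) be defined by v_0 = 0, v_1 = 3/2, v_{4t} = v_{2t}, v_{4t+2} = v_{2t+1} + 1, v_{2t+1} = (v_t + v_{t+1})/2 + 3/4, and let N(t) denote the number of occurrences of the block 01 in the binary expansion of t (padded with zeros to the left), equivalently the number of maximal blocks of 1s in the binary expansion of t. Then (3/4)·N(t) ≤ v_t ≤ 5·N(t) for all t ≥ 0. -/

import Mathlib

/-- The number of maximal blocks of `1`s in the binary expansion of `t`, equivalently the
number of occurrences of `01` in the left-zero-padded binary expansion of `t`. -/
def blockCount (t : ℕ) : ℕ :=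
  ((Finset.range (t + 1)).filter (fun j => t.testBit j ∧ ¬ t.testBit (j + 1))).card


lemma bc_pad (t : ℕ) : ∀ n, t + 1 ≤ n →
    ((Finset.range n).filter (fun j => t.testBit j ∧ ¬ t.testBit (j + 1))).card = blockCount t := by
  intro n h
  induction n with
  | zero => omega
  | succ n ih =>
    rcases Nat.lt_or_ge t n with h' | h'
    · have hb : t.testBit n = false :=
        Nat.testBit_lt_two_pow (lt_trans h' n.lt_two_pow_self)
      rw [Finset.range_add_one, Finset.filter_insert, if_neg (by simp [hb])]
      exact ih (by omega)
    · have : n = t := by omega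
      subst this; rfl

lemma bc_double (t : ℕ) : blockCount (2 * t) = blockCount t := by
  have h1 := (bc_pad (2 * t) (2 * t + 2) (by omega)).symm
  rw [h1, Finset.card_filter, Finset.sum_range_succ']
  have hshift : ∀ j, (2 * t).testBit (j + 1) = t.testBit j := by
    intro j
    rw [Nat.testBit_succ, Nat.mul_div_cancel_left t (by norm_num)]
  have h0 : (2 * t).testBit 0 = false := by
    have h2 : (2*t) % 2 = 0 := by omega
    simp [Nat.testBit_zero, h2]
  have key : ∀ j, (if ((2*t).testBit (j+1) ∧ ¬ (2*t).testBit (j+1+1)) then (1:ℕ) else 0)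
      = (if (t.testBit j ∧ ¬ t.testBit (j+1)) then (1:ℕ) else 0) := by
    intro j; simp only [hshift]
  rw [Finset.sum_congr rfl (fun j _ => key j), if_neg (by simp [h0]), add_zero,
    ← Finset.card_filter]
  exact bc_pad t (2*t+1) (by omega)

lemma bc_odd (t : ℕ) : blockCount (2 * t + 1) = blockCount t + (if t % 2 = 0 then 1 else 0) := by
  have h1 := (bc_pad (2 * t + 1) (2 * t + 3) (by omega)).symm
  rw [h1, Finset.card_filter, Finset.sum_range_succ']
  have hshift : ∀ j, (2 * t + 1).testBit (j + 1) = t.testBit j := by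
    intro j
    rw [Nat.testBit_succ, show (2*t+1)/2 = t from by omega]
  have h0 : (2 * t + 1).testBit 0 = true := by
    have h2 : (2*t+1) % 2 = 1 := by omega
    simp [Nat.testBit_zero, h2]
  have key : ∀ j, (if ((2*t+1).testBit (j+1) ∧ ¬ (2*t+1).testBit (j+1+1)) then (1:ℕ) else 0)
      = (if (t.testBit j ∧ ¬ t.testBit (j+1)) then (1:ℕ) else 0) := by
    intro j; simp only [hshift]
  rw [Finset.sum_congr rfl (fun j _ => key j), ← Finset.card_filter,
    bc_pad t (2*t+2) (by omega)]
  congr 1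
  rw [show (0:ℕ)+1 = 1 from rfl, show ((2*t+1).testBit 1) = t.testBit 0 from hshift 0, h0,
    Nat.testBit_zero]
  rcases Nat.mod_two_eq_zero_or_one t with h | h <;> simp [h]

def E : ℕ → ℚ
  | 0 => 0
  | 1 => 7/2
  | (n+2) =>
    if (n+2) % 2 = 1 then
      if ((n+2)/2) % 2 = 1 then (E ((n+2)/2) + 1)/2 else 7/2
    else
      if ((n+2)/2) % 2 = 1 then E ((n+2)/2) - 1 else E ((n+2)/2)
  decreasing_by all_goals simp_wf; omega

lemma E_two_mul (u : ℕ) : E (2*u) = if u % 2 = 1 then E u - 1 else E u := by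
  match u with
  | 0 => simp [E]
  | (u+1) =>
    rw [show 2*(u+1) = (2*u)+2 from by ring]
    rw [E]
    rw [if_neg (by omega), show (2*u+2)/2 = u+1 from by omega]

lemma E_odd (u : ℕ) : E (2*u+1) = if u % 2 = 1 then (E u + 1)/2 else 7/2 := by
  match u with
  | 0 => simp [E]
  | (u+1) =>
    rw [show 2*(u+1)+1 = (2*u+1)+2 from by ring]
    rw [E]
    rw [if_pos (by omega), show ((2*u+1)+2)/2 = u+1 from by omega]

lemma E_bounds : ∀ t : ℕ, (t % 2 = 1 → 1 ≤ E t ∧ E t ≤ 7/2) ∧ (t % 2 = 0 → 0 ≤ E t ∧ E t ≤ 5/2) := by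
  intro t
  induction t using Nat.strong_induction_on with
  | _ t ih =>
    match t, ih with
    | 0, _ => norm_num [E]
    | (t+1), ih =>
      rcases Nat.even_or_odd (t+1) with ⟨u, hu⟩ | ⟨u, hu⟩
      · have hu' : t + 1 = 2*u := by omega
        have hu1 : 1 ≤ u := by omega
        obtain ⟨ho, he⟩ := ih u (by omega)
        rw [hu', E_two_mul]
        constructor
        · intro h; omega
        · intro _
          rcases Nat.mod_two_eq_zero_or_one u with h | h
          · rw [if_neg (by omega)]; exact he h
          · rw [if_pos h]
            obtain ⟨a, b⟩ := ho h
            constructor <;> linarith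
      · have hu' : t + 1 = 2*u + 1 := by omega
        obtain ⟨ho, he⟩ := ih u (by omega)
        rw [hu', E_odd]
        constructor
        · intro _
          rcases Nat.mod_two_eq_zero_or_one u with h | h
          · rw [if_neg (by omega)]; norm_num
          · rw [if_pos h]
            obtain ⟨a, b⟩ := ho h
            constructor <;> linarith
        · intro h; omega
lemma v_double (v : ℕ → ℚ) (h4 : ∀ t : ℕ, v (4 * t) = v (2 * t))
    (h42 : ∀ t : ℕ, v (4 * t + 2) = v (2 * t + 1) + 1) (w : ℕ) :
    v (2*w) = v w + (if w % 2 = 1 then 1 else 0) := by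
  rcases Nat.even_or_odd w with ⟨x, hx⟩ | ⟨x, hx⟩
  · rw [show 2*w = 4*x from by omega, h4, show 2*x = w from by omega, if_neg (by omega), add_zero]
  · rw [show 2*w = 4*x+2 from by omega, h42, show 2*x+1 = w from by omega, if_pos (by omega)]

def GoodA (v : ℕ → ℚ) (t : ℕ) : Prop :=
  (3/4 : ℚ) * blockCount t ≤ v t ∧ v t ≤ 5 * blockCount t - E t

def GoodB (t : ℕ) : Prop :=
  blockCount t ≤ blockCount (t+1) + 1 ∧
  (5:ℚ) * blockCount (t+1) - E (t+1) ≤ 5 * blockCount t + (if t % 2 = 0 then 3/2 else -(5/2)) ∧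
  (t % 2 = 0 → blockCount t ≤ blockCount (t+1))

lemma key (v : ℕ → ℚ) (h0 : v 0 = 0) (h1 : v 1 = 3 / 2)
    (h4 : ∀ t : ℕ, v (4 * t) = v (2 * t))
    (h42 : ∀ t : ℕ, v (4 * t + 2) = v (2 * t + 1) + 1)
    (hodd : ∀ t : ℕ, v (2 * t + 1) = (v t + v (t + 1)) / 2 + 3 / 4) :
    ∀ s : ℕ, GoodA v s ∧ GoodA v (s+1) ∧ GoodB s := by
  have hN0 : blockCount 0 = 0 := by rfl
  have hN1 : blockCount 1 = 1 := by rfl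
  intro s
  induction s using Nat.strong_induction_on with
  | _ s ih =>
    rcases Nat.eq_zero_or_pos s with rfl | hpos
    · refine ⟨⟨?_, ?_⟩, ⟨?_, ?_⟩, ?_, ?_, ?_⟩ <;>
        simp [GoodA, GoodB, hN0, hN1, h0, h1, E] <;> norm_num
    rcases Nat.even_or_odd s with ⟨u, hu⟩ | ⟨u, hu⟩
    -- ===== case s = 2u, u ≥ 1 =====
    · have hs : s = 2*u := by omega
      subst hs
      have hu1 : 1 ≤ u := by omega
      obtain ⟨⟨H1l, H1u⟩, ⟨H2l, H2u⟩, H3, H4, H5⟩ := ih u (by omega)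
      have e1 : blockCount (2*u) = blockCount u := bc_double u
      have e6 := hodd u
      have e5 := v_double v h4 h42 u
      have hc3 : (blockCount u : ℚ) ≤ (blockCount (u+1) : ℚ) + 1 := by exact_mod_cast H3
      rcases Nat.mod_two_eq_zero_or_one u with hpar | hpar
      · -- u even
        have e2 : blockCount (2*u+1) = blockCount u + 1 := by
          rw [bc_odd, if_pos hpar]
        have e3 : E (2*u) = E u := by rw [E_two_mul, if_neg (by omega)]
        have e4 : E (2*u+1) = 7/2 := by rw [E_odd, if_neg (by omega)]
        have e5' : v (2*u) = v u := by rw [e5, if_neg (by omega), add_zero]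
        have H4' : (5:ℚ) * blockCount (u+1) - E (u+1) ≤ 5 * blockCount u + 3/2 := by
          have := H4; rwa [if_pos hpar] at this
        have H5' := H5 hpar
        have hc5 : (blockCount u : ℚ) ≤ (blockCount (u+1) : ℚ) := by exact_mod_cast H5'
        have hE : 0 ≤ E u ∧ E u ≤ 5/2 := (E_bounds u).2 hpar
        have hE' : 1 ≤ E (u+1) ∧ E (u+1) ≤ 7/2 := (E_bounds (u+1)).1 (by omega)
        refine ⟨⟨?_, ?_⟩, ⟨?_, ?_⟩, ?_, ?_, ?_⟩
        · rw [e1]; exact le_trans H1l (by rw[e5'])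
        · rw [e1, e3, e5']; exact H1u
        · rw [e2, e6]; push_cast; linarith
        · rw [e2, e4, e6]; push_cast; linarith [hE.1]
        · rw [e1, e2]; omega
        · rw [e1, e2, e4, if_pos (show (2*u) % 2 = 0 by omega)]; push_cast; linarith
        · intro _; rw [e1, e2]; omega
      · -- u odd
        have e2 : blockCount (2*u+1) = blockCount u := by
          rw [bc_odd, if_neg (by omega), add_zero]
        have e3 : E (2*u) = E u - 1 := by rw [E_two_mul, if_pos hpar]
        have e4 : E (2*u+1) = (E u + 1)/2 := by rw [E_odd, if_pos hpar]
        have e5' : v (2*u) = v u + 1 := by rw [e5, if_pos hpar]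
        have H4' : (5:ℚ) * blockCount (u+1) - E (u+1) ≤ 5 * blockCount u - 5/2 := by
          have := H4; rw [if_neg (by omega)] at this; linarith
        have hE : 1 ≤ E u ∧ E u ≤ 7/2 := (E_bounds u).1 hpar
        have hE' : 0 ≤ E (u+1) ∧ E (u+1) ≤ 5/2 := (E_bounds (u+1)).2 (by omega)
        refine ⟨⟨?_, ?_⟩, ⟨?_, ?_⟩, ?_, ?_, ?_⟩
        · rw [e1, e5']; linarith
        · rw [e1, e3, e5']; linarith
        · rw [e2, e6]; linarith
        · rw [e2, e4, e6]; linarith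
        · rw [e1, e2]; omega
        · rw [e1, e2, e4, if_pos (show (2*u) % 2 = 0 by omega)]; linarith [hE.1]
        · intro _; rw [e1, e2]
    -- ===== case s = 2u + 1 =====
    · have hs : s = 2*u + 1 := by omega
      subst hs
      obtain ⟨⟨H1l, H1u⟩, ⟨H2l, H2u⟩, H3, H4, H5⟩ := ih u (by omega)
      have e6 := hodd u
      have f1 : blockCount (2*u+1+1) = blockCount (u+1) := by
        rw [show 2*u+1+1 = 2*(u+1) from by ring, bc_double]
      have f2 : E (2*u+1+1) = if (u+1) % 2 = 1 then E (u+1) - 1 else E (u+1) := by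
        rw [show 2*u+1+1 = 2*(u+1) from by ring, E_two_mul]
      have f3 : v (2*u+1+1) = v (u+1) + (if (u+1) % 2 = 1 then 1 else 0) := by
        rw [show 2*u+1+1 = 2*(u+1) from by ring, v_double v h4 h42]
      have hc3 : (blockCount u : ℚ) ≤ (blockCount (u+1) : ℚ) + 1 := by exact_mod_cast H3
      rcases Nat.mod_two_eq_zero_or_one u with hpar | hpar
      · -- u even
        have e2 : blockCount (2*u+1) = blockCount u + 1 := by rw [bc_odd, if_pos hpar]
        have e4 : E (2*u+1) = 7/2 := by rw [E_odd, if_neg (by omega)]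
        have f2' : E (2*u+1+1) = E (u+1) - 1 := by rw [f2, if_pos (by omega)]
        have f3' : v (2*u+1+1) = v (u+1) + 1 := by rw [f3, if_pos (by omega)]
        have H4' : (5:ℚ) * blockCount (u+1) - E (u+1) ≤ 5 * blockCount u + 3/2 := by
          have := H4; rwa [if_pos hpar] at this
        have H5' := H5 hpar
        have hc5 : (blockCount u : ℚ) ≤ (blockCount (u+1) : ℚ) := by exact_mod_cast H5'
        have hE : 0 ≤ E u ∧ E u ≤ 5/2 := (E_bounds u).2 hpar
        have hE' : 1 ≤ E (u+1) ∧ E (u+1) ≤ 7/2 := (E_bounds (u+1)).1 (by omega)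
        refine ⟨⟨?_, ?_⟩, ⟨?_, ?_⟩, ?_, ?_, ?_⟩
        · rw [e2, e6]; push_cast; linarith
        · rw [e2, e4, e6]; push_cast; linarith [hE.1]
        · rw [f1, f3']; linarith
        · rw [f1, f2', f3']; linarith
        · rw [e2, f1]; omega
        · rw [e2, f1, f2', if_neg (show ¬ (2*u+1) % 2 = 0 by omega)]; push_cast; linarith
        · intro hcon; omega
      · -- u odd
        have e2 : blockCount (2*u+1) = blockCount u := by
          rw [bc_odd, if_neg (by omega), add_zero]
        have e4 : E (2*u+1) = (E u + 1)/2 := by rw [E_odd, if_pos hpar]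
        have f2' : E (2*u+1+1) = E (u+1) := by rw [f2, if_neg (by omega)]
        have f3' : v (2*u+1+1) = v (u+1) := by rw [f3, if_neg (by omega), add_zero]
        have H4' : (5:ℚ) * blockCount (u+1) - E (u+1) ≤ 5 * blockCount u - 5/2 := by
          have := H4; rw [if_neg (by omega)] at this; linarith
        have hE : 1 ≤ E u ∧ E u ≤ 7/2 := (E_bounds u).1 hpar
        have hE' : 0 ≤ E (u+1) ∧ E (u+1) ≤ 5/2 := (E_bounds (u+1)).2 (by omega)
        refine ⟨⟨?_, ?_⟩, ⟨?_, ?_⟩, ?_, ?_, ?_⟩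
        · rw [e2, e6]; linarith
        · rw [e2, e4, e6]; linarith
        · rw [f1, f3']; exact H2l
        · rw [f1, f2', f3']; exact H2u
        · rw [e2, f1]; omega
        · rw [e2, f1, f2', if_neg (show ¬ (2*u+1) % 2 = 0 by omega)]; linarith
        · intro hcon; omega

theorem v_linear_bounds (v : ℕ → ℚ) (h0 : v 0 = 0) (h1 : v 1 = 3 / 2)
    (h4 : ∀ t : ℕ, v (4 * t) = v (2 * t))
    (h42 : ∀ t : ℕ, v (4 * t + 2) = v (2 * t + 1) + 1)
    (hodd : ∀ t : ℕ, v (2 * t + 1) = (v t + v (t + 1)) / 2 + 3 / 4) :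
    ∀ t : ℕ, (3 / 4 : ℚ) * blockCount t ≤ v t ∧ v t ≤ 5 * blockCount t := by
  intro t
  obtain ⟨⟨hl, hu⟩, -, -⟩ := key v h0 h1 h4 h42 hodd t
  have hE : 0 ≤ E t := by
    rcases Nat.mod_two_eq_zero_or_one t with h | h
    · exact ((E_bounds t).2 h).1
    · linarith [((E_bounds t).1 h).1]
  exact ⟨hl, by linarith⟩
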